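/- Ratio-regularized improvement guarantee: for any two policies π̃ and π on a finite discounted MDP (with π(a|s) > 0 everywhere), J(π̃) − J(π) ≥ (1/(1−γ)) [ E_{(s,a)∼d_π} [ (π̃(a|s)/π(a|s)) A_π(s,a) ] − C · E_{(s,a)∼d_π} |π̃(a|s)/π(a|s) − 1| ], where C = ξγ/(1−γ) and ξ = max_{s,a} |A_π(s,a)|. -/

import Mathlib

open scoped BigOperators

/-- State transition matrix induced by policy `π`: `(Pmat P π) s s' = ∑ a, π s a * P s a s'`. -/
noncomputable def Pmat {S A : Type*} [Fintype A] (P : S → A → S → ℝ) (π : S → A → ℝ) :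
    Matrix S S ℝ := fun s s' => ∑ a, π s a * P s a s'

/-- State distribution at time `t` when starting from `p0` and following `π`. -/
noncomputable def stateDist {S A : Type*} [Fintype S] [DecidableEq S] [Fintype A]
    (P : S → A → S → ℝ) (π : S → A → ℝ) (p0 : S → ℝ) (t : ℕ) : S → ℝ :=
  (((Pmat P π).transpose) ^ t).mulVec p0

/-- Discounted state distribution `d_π(s) = (1-γ) ∑ γ^t Pr(s_t = s)`. -/
noncomputable def dDist {S A : Type*} [Fintype S] [DecidableEq S] [Fintype A]
    (P : S → A → S → ℝ) (π : S → A → ℝ) (p0 : S → ℝ) (γ : ℝ) (s : S) : ℝ :=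
  (1 - γ) * ∑' t : ℕ, γ ^ t * stateDist P π p0 t s

/-- Expected discounted return `J(π)` with initial distribution `p0`. -/
noncomputable def Jret {S A : Type*} [Fintype S] [DecidableEq S] [Fintype A]
    (P : S → A → S → ℝ) (π : S → A → ℝ) (r : S → A → ℝ) (p0 : S → ℝ) (γ : ℝ) : ℝ :=
  ∑' t : ℕ, γ ^ t * ∑ s, stateDist P π p0 t s * ∑ a, π s a * r s a

/-- Value function `V_π(s)`: return starting deterministically from `s`. -/
noncomputable def Vval {S A : Type*} [Fintype S] [Fintype A] [DecidableEq S]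
    (P : S → A → S → ℝ) (π : S → A → ℝ) (r : S → A → ℝ) (γ : ℝ) (s : S) : ℝ :=
  Jret P π r (fun s' => if s' = s then 1 else 0) γ

/-- Action-value function `Q_π(s,a)`. -/
noncomputable def Qval {S A : Type*} [Fintype S] [Fintype A] [DecidableEq S]
    (P : S → A → S → ℝ) (π : S → A → ℝ) (r : S → A → ℝ) (γ : ℝ) (s : S) (a : A) : ℝ :=
  r s a + γ * ∑ s', P s a s' * Vval P π r γ s'

/-- Advantage function `A_π(s,a) = Q_π(s,a) - V_π(s)`. -/
noncomputable def Adv {S A : Type*} [Fintype S] [Fintype A] [DecidableEq S]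
    (P : S → A → S → ℝ) (π : S → A → ℝ) (r : S → A → ℝ) (γ : ℝ) (s : S) (a : A) : ℝ :=
  Qval P π r γ s a - Vval P π r γ s

set_option linter.unusedSectionVars false

section Aux
variable {S A : Type*} [Fintype S] [Fintype A] [DecidableEq S]

/-- Row-stochastic matrix. -/
def IsStoch {S : Type*} [Fintype S] (M : Matrix S S ℝ) : Prop :=
  (∀ s s', 0 ≤ M s s') ∧ (∀ s, ∑ s', M s s' = 1)

lemma Pmat_isStoch (P : S → A → S → ℝ) (π : S → A → ℝ)
    (hP0 : ∀ s a s', 0 ≤ P s a s') (hP1 : ∀ s a, ∑ s', P s a s' = 1)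
    (hπ0 : ∀ s a, 0 ≤ π s a) (hπ1 : ∀ s, ∑ a, π s a = 1) :
    IsStoch (Pmat P π) := by
  constructor
  · intro s s'
    exact Finset.sum_nonneg fun a _ => mul_nonneg (hπ0 s a) (hP0 s a s')
  · intro s
    show ∑ s', ∑ a, π s a * P s a s' = 1
    rw [Finset.sum_comm]
    simp only [← Finset.mul_sum]
    simp [hP1, hπ1]

lemma IsStoch.pow {M : Matrix S S ℝ} (h : IsStoch M) (t : ℕ) : IsStoch (M ^ t) := by
  induction t with
  | zero =>
    constructor
    · intro s s'; simp [Matrix.one_apply]; positivity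
    · intro s; simp [Matrix.one_apply]
  | succ n ih =>
    rw [pow_succ]
    constructor
    · intro s s'
      exact Finset.sum_nonneg fun k _ => mul_nonneg (ih.1 s k) (h.1 k s')
    · intro s
      show ∑ s', ∑ k, (M ^ n) s k * M k s' = 1
      rw [Finset.sum_comm]
      simp only [← Finset.mul_sum]
      simp [h.2, ih.2]

omit [DecidableEq S] in
lemma abs_sum_prob_le (ρ g : S → ℝ) (B : ℝ) (hρ0 : ∀ s, 0 ≤ ρ s) (hρ1 : ∑ s, ρ s = 1)
    (hg : ∀ s, |g s| ≤ B) : |∑ s, ρ s * g s| ≤ B := by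
  calc |∑ s, ρ s * g s| ≤ ∑ s, |ρ s * g s| := Finset.abs_sum_le_sum_abs _ _
    _ ≤ ∑ s, ρ s * B := by
        apply Finset.sum_le_sum
        intro s _
        rw [abs_mul, abs_of_nonneg (hρ0 s)]
        exact mul_le_mul_of_nonneg_left (hg s) (hρ0 s)
    _ = B := by rw [← Finset.sum_mul, hρ1, one_mul]

lemma summable_geom_of_bound {γ : ℝ} (hγ0 : 0 ≤ γ) (hγ1 : γ < 1) (c : ℕ → ℝ) (B : ℝ)
    (h : ∀ t, |c t| ≤ B) : Summable (fun t => γ ^ t * c t) := by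
  apply Summable.of_norm_bounded
    ((summable_geometric_of_lt_one hγ0 hγ1).mul_left B)
  intro t
  rw [Real.norm_eq_abs, abs_mul, abs_of_nonneg (pow_nonneg hγ0 t), mul_comm]
  exact mul_le_mul_of_nonneg_right (h t) (pow_nonneg hγ0 t)

lemma stateDist_succ (P : S → A → S → ℝ) (π : S → A → ℝ) (p0 : S → ℝ) (t : ℕ) :
    stateDist P π p0 (t + 1) = ((Pmat P π).transpose).mulVec (stateDist P π p0 t) := by
  unfold stateDist
  rw [pow_succ', Matrix.mulVec_mulVec]

lemma stateDist_zero (P : S → A → S → ℝ) (π : S → A → ℝ) (p0 : S → ℝ) :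
    stateDist P π p0 0 = p0 := by
  unfold stateDist
  rw [pow_zero, Matrix.one_mulVec]

lemma stateDist_eq_transpose (P : S → A → S → ℝ) (π : S → A → ℝ) (p0 : S → ℝ) (t : ℕ) (s : S) :
    stateDist P π p0 t s = ∑ s', ((Pmat P π) ^ t) s' s * p0 s' := by
  unfold stateDist Matrix.mulVec dotProduct
  rw [← Matrix.transpose_pow]
  simp [Matrix.transpose_apply]

lemma stateDist_nonneg (P : S → A → S → ℝ) (π : S → A → ℝ) (p0 : S → ℝ)
    (hM : IsStoch (Pmat P π)) (hp00 : ∀ s, 0 ≤ p0 s) (t : ℕ) (s : S) :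
    0 ≤ stateDist P π p0 t s := by
  rw [stateDist_eq_transpose]
  exact Finset.sum_nonneg fun s' _ => mul_nonneg ((hM.pow t).1 s' s) (hp00 s')

lemma stateDist_sum_one (P : S → A → S → ℝ) (π : S → A → ℝ) (p0 : S → ℝ)
    (hM : IsStoch (Pmat P π)) (hp01 : ∑ s, p0 s = 1) (t : ℕ) :
    ∑ s, stateDist P π p0 t s = 1 := by
  simp only [stateDist_eq_transpose]
  rw [Finset.sum_comm]
  simp only [← Finset.sum_mul]
  calc ∑ s', (∑ s, ((Pmat P π) ^ t) s' s) * p0 s' = ∑ s', 1 * p0 s' := by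
        apply Finset.sum_congr rfl; intro s' _; rw [(hM.pow t).2 s']
    _ = 1 := by simpa using hp01

end Aux

section V
variable {S A : Type*} [Fintype S] [Fintype A] [DecidableEq S]

lemma exists_bound (g : S → ℝ) : ∃ B : ℝ, ∀ s, |g s| ≤ B := by
  refine ⟨∑ s, |g s|, fun s => ?_⟩
  exact Finset.single_le_sum (fun s' _ => abs_nonneg (g s')) (Finset.mem_univ s)

lemma mulVec_pow_bound {M : Matrix S S ℝ} (hM : IsStoch M) (g : S → ℝ) (B : ℝ)
    (hg : ∀ s, |g s| ≤ B) (t : ℕ) (s : S) : |((M ^ t).mulVec g) s| ≤ B :=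
  abs_sum_prob_le _ _ _ (fun s' => (hM.pow t).1 s s') ((hM.pow t).2 s) hg

lemma dot_transpose (M : Matrix S S ℝ) (u g : S → ℝ) :
    ∑ s, (M.transpose.mulVec u) s * g s = ∑ s, u s * (M.mulVec g) s := by
  unfold Matrix.mulVec dotProduct
  simp only [Finset.sum_mul, Finset.mul_sum, Matrix.transpose_apply]
  rw [Finset.sum_comm]
  apply Finset.sum_congr rfl; intro s _
  apply Finset.sum_congr rfl; intro s' _
  ring

lemma Vval_eq_tsum (P : S → A → S → ℝ) (π : S → A → ℝ) (r : S → A → ℝ) (γ : ℝ) (s : S) :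
    Vval P π r γ s =
      ∑' t : ℕ, γ ^ t * (((Pmat P π) ^ t).mulVec (fun s' => ∑ a, π s' a * r s' a)) s := by
  unfold Vval Jret
  congr 1; funext t; congr 1
  simp only [stateDist_eq_transpose]
  unfold Matrix.mulVec dotProduct
  apply Finset.sum_congr rfl; intro s' _
  simp [mul_ite, Finset.sum_ite_eq]

lemma Vval_summable (P : S → A → S → ℝ) (π : S → A → ℝ) (r : S → A → ℝ) {γ : ℝ}
    (hγ0 : 0 ≤ γ) (hγ1 : γ < 1) (hM : IsStoch (Pmat P π)) {B : ℝ}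
    (hg : ∀ s', |∑ a, π s' a * r s' a| ≤ B) (s : S) :
    Summable (fun t => γ ^ t * (((Pmat P π) ^ t).mulVec (fun s' => ∑ a, π s' a * r s' a)) s) :=
  summable_geom_of_bound hγ0 hγ1 _ B (fun t => mulVec_pow_bound hM _ B hg t s)

lemma Vval_bellman (P : S → A → S → ℝ) (π : S → A → ℝ) (r : S → A → ℝ) {γ : ℝ}
    (hγ0 : 0 ≤ γ) (hγ1 : γ < 1) (hM : IsStoch (Pmat P π)) (s : S) :
    Vval P π r γ s =
      (∑ a, π s a * r s a) + γ * ∑ s', Pmat P π s s' * Vval P π r γ s' := by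
  obtain ⟨B, hg⟩ := exists_bound (fun s' => ∑ a, π s' a * r s' a)
  set g : S → ℝ := fun s' => ∑ a, π s' a * r s' a with hgdef
  set M := Pmat P π with hMdef
  have hsum : ∀ s, Summable (fun t => γ ^ t * ((M ^ t).mulVec g) s) :=
    fun s => Vval_summable P π r hγ0 hγ1 hM hg s
  have key : ∀ t, γ ^ (t+1) * ((M ^ (t+1)).mulVec g) s
      = ∑ s', M s s' * (γ * (γ ^ t * ((M ^ t).mulVec g) s')) := by
    intro t
    rw [pow_succ' M t, ← Matrix.mulVec_mulVec]
    show γ ^ (t+1) * ∑ s', M s s' * ((M ^ t).mulVec g) s' = _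
    rw [Finset.mul_sum]
    apply Finset.sum_congr rfl; intro s' _
    ring
  rw [Vval_eq_tsum, Summable.tsum_eq_zero_add (hsum s)]
  simp only [key]
  rw [Summable.tsum_finsetSum (fun s' _ => by
    have := ((hsum s').mul_left γ).mul_left (M s s')
    simpa [mul_assoc] using this)]
  have hrw : ∀ s' : S, ∑' t : ℕ, M s s' * (γ * (γ ^ t * ((M ^ t).mulVec g) s'))
      = M s s' * (γ * Vval P π r γ s') := by
    intro s'
    rw [tsum_mul_left, tsum_mul_left, Vval_eq_tsum]
  simp only [hrw]
  rw [pow_zero, one_mul, pow_zero, Matrix.one_mulVec]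
  rw [Finset.mul_sum]
  congr 1
  apply Finset.sum_congr rfl; intro s' _
  ring

lemma Jret_eq_sum_p0_V (P : S → A → S → ℝ) (π : S → A → ℝ) (r : S → A → ℝ) (p0 : S → ℝ)
    {γ : ℝ} (hγ0 : 0 ≤ γ) (hγ1 : γ < 1) (hM : IsStoch (Pmat P π)) :
    Jret P π r p0 γ = ∑ s, p0 s * Vval P π r γ s := by
  obtain ⟨B, hg⟩ := exists_bound (fun s' => ∑ a, π s' a * r s' a)
  set g : S → ℝ := fun s' => ∑ a, π s' a * r s' a with hgdef
  set M := Pmat P π with hMdef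
  unfold Jret
  have step : ∀ t : ℕ, γ ^ t * ∑ s, stateDist P π p0 t s * g s
      = ∑ s, p0 s * (γ ^ t * ((M ^ t).mulVec g) s) := by
    intro t
    have h1 : ∑ s, stateDist P π p0 t s * g s = ∑ s, p0 s * ((M ^ t).mulVec g) s := by
      have : stateDist P π p0 t = ((M ^ t).transpose).mulVec p0 := by
        unfold stateDist
        rw [Matrix.transpose_pow]
      rw [this, dot_transpose]
    rw [h1, Finset.mul_sum]
    apply Finset.sum_congr rfl; intro s _
    ring
  rw [show (fun t : ℕ => γ ^ t * ∑ s, stateDist P π p0 t s * ∑ a, π s a * r s a)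
    = fun t => ∑ s, p0 s * (γ ^ t * ((M ^ t).mulVec g) s) from funext step]
  rw [Summable.tsum_finsetSum (fun s _ => ((Vval_summable P π r hγ0 hγ1 hM hg s)).mul_left (p0 s))]
  apply Finset.sum_congr rfl; intro s _
  rw [tsum_mul_left, Vval_eq_tsum]

lemma adv_avg (P : S → A → S → ℝ) (π πt : S → A → ℝ) (r : S → A → ℝ) (γ : ℝ)
    (hπt1 : ∀ s, ∑ a, πt s a = 1) (s : S) :
    ∑ a, πt s a * Adv P π r γ s a =
      (∑ a, πt s a * r s a) + γ * ((Pmat P πt).mulVec (Vval P π r γ)) s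
        - Vval P π r γ s := by
  unfold Adv Qval
  have e1 : ∀ a, πt s a * (r s a + γ * ∑ s', P s a s' * Vval P π r γ s'
      - Vval P π r γ s)
      = πt s a * r s a + γ * (πt s a * ∑ s', P s a s' * Vval P π r γ s')
        - πt s a * Vval P π r γ s := by intro a; ring
  simp only [e1]
  rw [Finset.sum_sub_distrib, Finset.sum_add_distrib, ← Finset.sum_mul, hπt1, one_mul,
    ← Finset.mul_sum]
  congr 2
  congr 1
  show ∑ a, πt s a * ∑ s', P s a s' * Vval P π r γ s'
      = ∑ s', (∑ a, πt s a * P s a s') * Vval P π r γ s'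
  simp only [Finset.mul_sum]
  rw [Finset.sum_comm]
  apply Finset.sum_congr rfl; intro s' _
  rw [Finset.sum_mul]
  apply Finset.sum_congr rfl; intro a _
  ring

lemma prob_entry_le_one (ρ : S → ℝ) (h0 : ∀ s, 0 ≤ ρ s) (h1 : ∑ s, ρ s = 1) (s : S) :
    |ρ s| ≤ 1 := by
  rw [abs_of_nonneg (h0 s), ← h1]
  exact Finset.single_le_sum (fun s' _ => h0 s') (Finset.mem_univ s)

lemma pdl (P : S → A → S → ℝ) (π πt : S → A → ℝ) (r : S → A → ℝ) (p0 : S → ℝ) {γ : ℝ}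
    (hγ0 : 0 ≤ γ) (hγ1 : γ < 1)
    (hM : IsStoch (Pmat P π)) (hMt : IsStoch (Pmat P πt))
    (hπt1 : ∀ s, ∑ a, πt s a = 1)
    (hp00 : ∀ s, 0 ≤ p0 s) (hp01 : ∑ s, p0 s = 1) :
    ∑ s, dDist P πt p0 γ s * (∑ a, πt s a * Adv P π r γ s a) =
      (1 - γ) * (Jret P πt r p0 γ - Jret P π r p0 γ) := by
  set V := Vval P π r γ with hV
  set Mt := Pmat P πt with hMtdef
  set f : S → ℝ := fun s => ∑ a, πt s a * Adv P π r γ s a with hf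
  set ρ : ℕ → S → ℝ := fun t => stateDist P πt p0 t with hρ
  have hρ0 : ∀ t s, 0 ≤ ρ t s := fun t s => stateDist_nonneg P πt p0 hMt hp00 t s
  have hρ1 : ∀ t, ∑ s, ρ t s = 1 := fun t => stateDist_sum_one P πt p0 hMt hp01 t
  obtain ⟨Bf, hBf⟩ := exists_bound f
  obtain ⟨BV, hBV⟩ := exists_bound V
  obtain ⟨Br, hBr⟩ := exists_bound (fun s => ∑ a, πt s a * r s a)
  have hfs : ∀ s, f s = (∑ a, πt s a * r s a) + γ * (Mt.mulVec V) s - V s :=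
    fun s => adv_avg P π πt r γ hπt1 s
  set av : ℕ → ℝ := fun t => ∑ s, ρ t s * (∑ a, πt s a * r s a) with hav
  set bv : ℕ → ℝ := fun t => ∑ s, ρ t s * V s with hbv
  have hBa : ∀ t, |av t| ≤ Br := fun t => abs_sum_prob_le _ _ _ (hρ0 t) (hρ1 t) hBr
  have hBb : ∀ t, |bv t| ≤ BV := fun t => abs_sum_prob_le _ _ _ (hρ0 t) (hρ1 t) hBV
  have hsa : Summable (fun t => γ ^ t * av t) := summable_geom_of_bound hγ0 hγ1 _ Br hBa
  have hsb : Summable (fun t => γ ^ t * bv t) := summable_geom_of_bound hγ0 hγ1 _ BV hBb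
  have hsb' : Summable (fun t => γ ^ t * (γ * bv (t+1))) := by
    apply summable_geom_of_bound hγ0 hγ1 _ (γ * BV)
    intro t
    rw [abs_mul, abs_of_nonneg hγ0]
    exact mul_le_mul_of_nonneg_left (hBb (t+1)) hγ0
  -- swap sum and tsum in LHS
  have hsm : ∀ s, Summable (fun t => γ ^ t * (ρ t s * f s)) := by
    intro s
    apply summable_geom_of_bound hγ0 hγ1 _ |f s|
    intro t
    rw [abs_mul]
    calc |ρ t s| * |f s| ≤ 1 * |f s| :=
          mul_le_mul_of_nonneg_right (prob_entry_le_one _ (hρ0 t) (hρ1 t) s) (abs_nonneg _)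
      _ = |f s| := one_mul _
  have hswap : ∑ s, dDist P πt p0 γ s * f s
      = (1 - γ) * ∑' t : ℕ, γ ^ t * ∑ s, ρ t s * f s := by
    have h1 : ∀ s, dDist P πt p0 γ s * f s
        = (1 - γ) * ∑' t : ℕ, γ ^ t * (ρ t s * f s) := by
      intro s
      unfold dDist
      rw [mul_assoc, ← tsum_mul_right]
      simp [mul_assoc, hρ]
    simp only [h1]
    rw [← Finset.mul_sum]
    congr 1
    rw [← Summable.tsum_finsetSum (fun s _ => hsm s)]
    congr 1; funext t
    rw [← Finset.mul_sum]
  -- per-step identity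
  have hg : ∀ t, ∑ s, ρ t s * f s = av t + γ * bv (t+1) - bv t := by
    intro t
    simp only [hfs, mul_sub, mul_add, Finset.sum_sub_distrib, Finset.sum_add_distrib]
    congr 1
    congr 1
    calc ∑ s, ρ t s * (γ * Mt.mulVec V s) = γ * ∑ s, ρ t s * Mt.mulVec V s := by
          rw [Finset.mul_sum]; apply Finset.sum_congr rfl; intro s _; ring
      _ = γ * ∑ s, (Mt.transpose.mulVec (ρ t)) s * V s := by rw [dot_transpose]
      _ = γ * bv (t+1) := by
          congr 1
          apply Finset.sum_congr rfl; intro s _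
          congr 1
          show (Mt.transpose.mulVec (stateDist P πt p0 t)) s = stateDist P πt p0 (t+1) s
          rw [stateDist_succ P πt p0 t]
  simp only [hg] at hswap
  have hsplit : ∀ t : ℕ, γ ^ t * (av t + γ * bv (t+1) - bv t)
      = γ ^ t * av t + γ ^ t * (γ * bv (t+1)) - γ ^ t * bv t := fun t => by ring
  simp only [hsplit] at hswap
  rw [Summable.tsum_sub (hsa.add hsb') hsb, Summable.tsum_add hsa hsb'] at hswap
  have hJt : ∑' t : ℕ, γ ^ t * av t = Jret P πt r p0 γ := rfl
  have hshift : ∑' t : ℕ, γ ^ t * (γ * bv (t+1))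
      = (∑' t : ℕ, γ ^ t * bv t) - bv 0 := by
    have h0 := Summable.tsum_eq_zero_add hsb
    have h1 : ∀ t : ℕ, γ ^ (t+1) * bv (t+1) = γ ^ t * (γ * bv (t+1)) := fun t => by ring
    simp only [h1] at h0
    rw [h0]
    simp
  have hb0 : bv 0 = Jret P π r p0 γ := by
    rw [Jret_eq_sum_p0_V P π r p0 hγ0 hγ1 hM]
    apply Finset.sum_congr rfl; intro s _
    congr 1
    show stateDist P πt p0 0 s = p0 s
    rw [stateDist_zero]
  rw [hswap, hJt, hshift, hb0]
  ring

lemma dDist_nonneg (P : S → A → S → ℝ) (π : S → A → ℝ) (p0 : S → ℝ) {γ : ℝ}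
    (hγ0 : 0 ≤ γ) (hγ1 : γ < 1) (hM : IsStoch (Pmat P π)) (hp00 : ∀ s, 0 ≤ p0 s) (s : S) :
    0 ≤ dDist P π p0 γ s := by
  apply mul_nonneg (by linarith)
  exact tsum_nonneg fun t =>
    mul_nonneg (pow_nonneg hγ0 t) (stateDist_nonneg P π p0 hM hp00 t s)

lemma dDist_fixed (P : S → A → S → ℝ) (π : S → A → ℝ) (p0 : S → ℝ) {γ : ℝ}
    (hγ0 : 0 ≤ γ) (hγ1 : γ < 1) (hM : IsStoch (Pmat P π))
    (hp00 : ∀ s, 0 ≤ p0 s) (hp01 : ∑ s, p0 s = 1) (s : S) :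
    dDist P π p0 γ s = (1 - γ) * p0 s + γ * ∑ s', Pmat P π s' s * dDist P π p0 γ s' := by
  have hsm : ∀ s', Summable (fun t => γ ^ t * stateDist P π p0 t s') := fun s' =>
    summable_geom_of_bound hγ0 hγ1 _ 1 (fun t =>
      prob_entry_le_one _ (stateDist_nonneg P π p0 hM hp00 t)
        (stateDist_sum_one P π p0 hM hp01 t) s')
  unfold dDist
  rw [Summable.tsum_eq_zero_add (hsm s)]
  have key : ∀ t : ℕ, γ ^ (t+1) * stateDist P π p0 (t+1) s
      = ∑ s', Pmat P π s' s * (γ * (γ ^ t * stateDist P π p0 t s')) := by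
    intro t
    rw [stateDist_succ]
    show γ ^ (t+1) * ∑ s', (Pmat P π).transpose s s' * stateDist P π p0 t s' = _
    rw [Finset.mul_sum]
    apply Finset.sum_congr rfl; intro s' _
    rw [Matrix.transpose_apply]
    ring
  simp only [key]
  rw [Summable.tsum_finsetSum (fun s' (_ : s' ∈ Finset.univ) => by
    simpa [mul_assoc] using (((hsm s').mul_left γ).mul_left (Pmat P π s' s)))]
  have hrw : ∀ s' : S, ∑' t : ℕ, Pmat P π s' s * (γ * (γ ^ t * stateDist P π p0 t s'))
      = Pmat P π s' s * (γ * ∑' t : ℕ, γ ^ t * stateDist P π p0 t s') := by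
    intro s'; rw [tsum_mul_left, tsum_mul_left]
  simp only [hrw]
  rw [pow_zero, one_mul, stateDist_zero]
  rw [mul_add]
  congr 1
  rw [Finset.mul_sum, Finset.mul_sum]
  apply Finset.sum_congr rfl; intro s' _
  ring

end V

theorem ratio_regularized_improvement_guarantee {S A : Type*}
    [Fintype S] [Fintype A] [DecidableEq S] [Nonempty S] [Nonempty A]
    (P : S → A → S → ℝ) (π πt : S → A → ℝ) (r : S → A → ℝ) (p0 : S → ℝ) (γ : ℝ)
    (hγ0 : 0 ≤ γ) (hγ1 : γ < 1)
    (hP0 : ∀ s a s', 0 ≤ P s a s') (hP1 : ∀ s a, ∑ s', P s a s' = 1)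
    (hπpos : ∀ s a, 0 < π s a) (hπ1 : ∀ s, ∑ a, π s a = 1)
    (hπt0 : ∀ s a, 0 ≤ πt s a) (hπt1 : ∀ s, ∑ a, πt s a = 1)
    (hp00 : ∀ s, 0 ≤ p0 s) (hp01 : ∑ s, p0 s = 1) :
    Jret P πt r p0 γ - Jret P π r p0 γ ≥
      (1 / (1 - γ)) *
        ((∑ s, ∑ a, dDist P π p0 γ s * π s a * (πt s a / π s a * Adv P π r γ s a)) -
          ((Finset.univ.sup' Finset.univ_nonempty
              fun sa : S × A => |Adv P π r γ sa.1 sa.2|) * γ / (1 - γ)) *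
            ∑ s, ∑ a, dDist P π p0 γ s * π s a * |πt s a / π s a - 1|) := by
  have hπ0 : ∀ s a, 0 ≤ π s a := fun s a => (hπpos s a).le
  have hM : IsStoch (Pmat P π) := Pmat_isStoch P π hP0 hP1 hπ0 hπ1
  have hMt : IsStoch (Pmat P πt) := Pmat_isStoch P πt hP0 hP1 hπt0 hπt1
  have h1γ : (0:ℝ) < 1 - γ := by linarith
  set ξ := Finset.univ.sup' Finset.univ_nonempty
    (fun sa : S × A => |Adv P π r γ sa.1 sa.2|) with hξdef
  have hξ : ∀ s a, |Adv P π r γ s a| ≤ ξ := fun s a =>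
    Finset.le_sup' (f := fun sa : S × A => |Adv P π r γ sa.1 sa.2|) (Finset.mem_univ (s, a))
  have hξ0 : 0 ≤ ξ :=
    le_trans (abs_nonneg _) (hξ (Classical.arbitrary S) (Classical.arbitrary A))
  set d := dDist P π p0 γ with hddef
  set dt := dDist P πt p0 γ with hdtdef
  set f : S → ℝ := fun s => ∑ a, πt s a * Adv P π r γ s a with hfdef
  have hfb : ∀ s, |f s| ≤ ξ := fun s =>
    abs_sum_prob_le (πt s) (Adv P π r γ s) ξ (hπt0 s) (hπt1 s) (fun a => hξ s a)
  set D := ∑ s, d s * ∑ a, |πt s a - π s a| with hDdef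
  have hd0 : ∀ s, 0 ≤ d s := fun s => dDist_nonneg P π p0 hγ0 hγ1 hM hp00 s
  have hdfix : ∀ s, d s = (1 - γ) * p0 s + γ * ∑ s', Pmat P π s' s * d s' :=
    fun s => dDist_fixed P π p0 hγ0 hγ1 hM hp00 hp01 s
  have hdtfix : ∀ s, dt s = (1 - γ) * p0 s + γ * ∑ s', Pmat P πt s' s * dt s' :=
    fun s => dDist_fixed P πt p0 hγ0 hγ1 hMt hp00 hp01 s
  set e : S → ℝ := fun s => dt s - d s with hedef
  set u : S → ℝ := fun s => γ * ∑ s', (Pmat P πt s' s - Pmat P π s' s) * d s' with hudef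
  -- fixed point for e
  have hefix : ∀ s, e s = γ * (∑ s', Pmat P πt s' s * e s') + u s := by
    intro s
    have hterm : ∀ s' : S, Pmat P πt s' s * dt s' - Pmat P π s' s * d s'
        = Pmat P πt s' s * e s' + (Pmat P πt s' s - Pmat P π s' s) * d s' := by
      intro s'
      simp only [hedef]
      ring
    calc e s = γ * ∑ s', Pmat P πt s' s * dt s' - γ * ∑ s', Pmat P π s' s * d s' := by
          simp only [hedef]
          rw [hdtfix s, hdfix s]
          ring
      _ = γ * ∑ s', (Pmat P πt s' s * e s' + (Pmat P πt s' s - Pmat P π s' s) * d s') := by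
          rw [← mul_sub, ← Finset.sum_sub_distrib]
          congr 1
          exact Finset.sum_congr rfl fun s' _ => hterm s'
      _ = γ * (∑ s', Pmat P πt s' s * e s') + u s := by
          rw [Finset.sum_add_distrib, mul_add, hudef]
  -- ℓ¹ contraction
  have hL1 : ∑ s, |e s| ≤ γ * ∑ s, |e s| + ∑ s, |u s| := by
    calc ∑ s, |e s| ≤ ∑ s, (γ * ∑ s', Pmat P πt s' s * |e s'| + |u s|) := by
          apply Finset.sum_le_sum
          intro s _
          rw [hefix s]
          calc |γ * (∑ s', Pmat P πt s' s * e s') + u s|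
              ≤ |γ * (∑ s', Pmat P πt s' s * e s')| + |u s| := abs_add_le _ _
            _ ≤ γ * (∑ s', Pmat P πt s' s * |e s'|) + |u s| := by
                refine add_le_add ?_ le_rfl
                rw [abs_mul, abs_of_nonneg hγ0]
                apply mul_le_mul_of_nonneg_left _ hγ0
                calc |∑ s', Pmat P πt s' s * e s'| ≤ ∑ s', |Pmat P πt s' s * e s'| :=
                      Finset.abs_sum_le_sum_abs _ _
                  _ = ∑ s', Pmat P πt s' s * |e s'| := by
                      apply Finset.sum_congr rfl; intro s' _
                      rw [abs_mul, abs_of_nonneg (hMt.1 s' s)]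
      _ = γ * ∑ s, |e s| + ∑ s, |u s| := by
          rw [Finset.sum_add_distrib, ← Finset.mul_sum]
          congr 2
          rw [Finset.sum_comm]
          calc ∑ s', ∑ s, Pmat P πt s' s * |e s'| = ∑ s', |e s'| * ∑ s, Pmat P πt s' s := by
                apply Finset.sum_congr rfl; intro s' _
                rw [Finset.mul_sum]
                apply Finset.sum_congr rfl; intro s _
                ring
            _ = ∑ s', |e s'| := by
                apply Finset.sum_congr rfl; intro s' _
                rw [hMt.2 s', mul_one]
  -- bound on u
  have hMdiff : ∀ s' s : S, Pmat P πt s' s - Pmat P π s' s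
      = ∑ a, (πt s' a - π s' a) * P s' a s := by
    intro s' s
    show (∑ a, πt s' a * P s' a s) - (∑ a, π s' a * P s' a s) = _
    rw [← Finset.sum_sub_distrib]
    apply Finset.sum_congr rfl; intro a _
    ring
  have huB : ∑ s, |u s| ≤ γ * D := by
    calc ∑ s, |u s| ≤ ∑ s, γ * ∑ s', (∑ a, |πt s' a - π s' a| * P s' a s) * d s' := by
          apply Finset.sum_le_sum
          intro s _
          simp only [hudef]
          rw [abs_mul, abs_of_nonneg hγ0]
          apply mul_le_mul_of_nonneg_left _ hγ0
          calc |∑ s', (Pmat P πt s' s - Pmat P π s' s) * d s'|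
              ≤ ∑ s', |(Pmat P πt s' s - Pmat P π s' s) * d s'| :=
                Finset.abs_sum_le_sum_abs _ _
            _ ≤ ∑ s', (∑ a, |πt s' a - π s' a| * P s' a s) * d s' := by
                apply Finset.sum_le_sum
                intro s' _
                rw [abs_mul, abs_of_nonneg (hd0 s')]
                apply mul_le_mul_of_nonneg_right _ (hd0 s')
                rw [hMdiff s' s]
                calc |∑ a, (πt s' a - π s' a) * P s' a s|
                    ≤ ∑ a, |(πt s' a - π s' a) * P s' a s| := Finset.abs_sum_le_sum_abs _ _
                  _ = ∑ a, |πt s' a - π s' a| * P s' a s := by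
                      apply Finset.sum_congr rfl; intro a _
                      rw [abs_mul, abs_of_nonneg (hP0 s' a s)]
      _ = γ * D := by
          rw [← Finset.mul_sum]
          congr 1
          rw [Finset.sum_comm, hDdef]
          apply Finset.sum_congr rfl; intro s' _
          simp only [Finset.sum_mul]
          rw [Finset.sum_comm, Finset.mul_sum]
          apply Finset.sum_congr rfl; intro a _
          have hre : ∀ s : S, |πt s' a - π s' a| * P s' a s * d s'
              = (|πt s' a - π s' a| * d s') * P s' a s := fun s => by ring
          simp only [hre]
          rw [← Finset.mul_sum, hP1]
          ring
  -- combine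
  have hEl1 : ∑ s, |e s| ≤ γ * D / (1 - γ) := by
    rw [le_div_iff₀ h1γ]
    nlinarith [hL1, huB]
  have hEbound : |∑ s, e s * f s| ≤ (∑ s, |e s|) * ξ := by
    calc |∑ s, e s * f s| ≤ ∑ s, |e s * f s| := Finset.abs_sum_le_sum_abs _ _
      _ ≤ ∑ s, |e s| * ξ := by
          apply Finset.sum_le_sum
          intro s _
          rw [abs_mul]
          exact mul_le_mul_of_nonneg_left (hfb s) (abs_nonneg _)
      _ = (∑ s, |e s|) * ξ := by rw [Finset.sum_mul]
  set K := γ * D / (1 - γ) with hK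
  have hdtf : ∑ s, d s * f s - ξ * K ≤ ∑ s, dt s * f s := by
    have h1 : ∑ s, dt s * f s - ∑ s, d s * f s = ∑ s, e s * f s := by
      rw [← Finset.sum_sub_distrib]
      apply Finset.sum_congr rfl; intro s _
      simp only [hedef]
      ring
    have h2 : -((∑ s, |e s|) * ξ) ≤ ∑ s, e s * f s := by
      have := neg_abs_le (∑ s, e s * f s)
      linarith [hEbound]
    have h3 : (∑ s, |e s|) * ξ ≤ K * ξ := mul_le_mul_of_nonneg_right hEl1 hξ0
    have h4 : ξ * K = K * ξ := mul_comm _ _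
    linarith
  -- rewrite the goal's two double sums
  have hT1 : ∑ s, ∑ a, d s * π s a * (πt s a / π s a * Adv P π r γ s a)
      = ∑ s, d s * f s := by
    apply Finset.sum_congr rfl; intro s _
    rw [hfdef, Finset.mul_sum]
    apply Finset.sum_congr rfl; intro a _
    have hne : π s a ≠ 0 := (hπpos s a).ne'
    field_simp
  have hT2 : ∑ s, ∑ a, d s * π s a * |πt s a / π s a - 1| = D := by
    rw [hDdef]
    apply Finset.sum_congr rfl; intro s _
    rw [Finset.mul_sum]
    apply Finset.sum_congr rfl; intro a _
    have hpa := hπpos s a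
    have key : π s a * |πt s a / π s a - 1| = |πt s a - π s a| := by
      rw [show π s a * |πt s a / π s a - 1| = |π s a| * |πt s a / π s a - 1| from by
        rw [abs_of_pos hpa]]
      rw [← abs_mul]
      congr 1
      field_simp
    rw [mul_assoc, key]
  have hPDL : ∑ s, dt s * f s = (1 - γ) * (Jret P πt r p0 γ - Jret P π r p0 γ) :=
    pdl P π πt r p0 hγ0 hγ1 hM hMt hπt1 hp00 hp01
  rw [ge_iff_le, hT1, hT2]
  have hCK : ξ * γ / (1 - γ) * D = ξ * K := by
    rw [hK]; ring
  rw [hCK]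
  calc 1 / (1 - γ) * (∑ s, d s * f s - ξ * K)
      ≤ 1 / (1 - γ) * ∑ s, dt s * f s := by
        apply mul_le_mul_of_nonneg_left hdtf
        positivity
    _ = Jret P πt r p0 γ - Jret P π r p0 γ := by
        rw [hPDL]
        field_simp
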